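/- Suppose 0 < α < 1/λ₁, λ_k > 0, and z_k^(t) ≠ 0 at some time t. Then z_k^(t+1) ≠ 0, and for every l ∈ {1, ..., k−1} the coefficient ratios contract by the factor γ_k = (1/(1 + αλ_k))² < 1: (z_l^(t+1)/z_k^(t+1))² ≤ γ_k (z_l^(t)/z_k^(t))². -/

import Mathlib

set_option autoImplicit false
set_option maxHeartbeats 1000000

open scoped RealInnerProductSpace

/-- `matVec A v` is the matrix-vector product `A v`, viewed as a map on Euclidean space. -/
noncomputable def matVec {n : ℕ} (A : Matrix (Fin n) (Fin n) ℝ)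
    (v : EuclideanSpace ℝ (Fin n)) : EuclideanSpace ℝ (Fin n) :=
  WithLp.toLp 2 (A.mulVec v)

/-- one-step contraction of the lower-order coefficient ratios
`(z_l/z_k)²` by the factor `γ_k = (1/(1+αλ_k))² < 1`.
Indices are 0-based: the 1-based eigenvalue `λ_j` is `lam ⟨j-1, _⟩`, so the 1-based range
`l ∈ {1, …, k-1}` corresponds to the 0-based indices `l` with `(l : ℕ) < k - 1`. -/
theorem krasulina_lower_ratio_contraction
    {d : ℕ}
    (C : Matrix (Fin d) (Fin d) ℝ) (hCsymm : C.IsSymm) (hCpsd : C.PosSemidef)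
    (lam : Fin d → ℝ) (q : Fin d → EuclideanSpace ℝ (Fin d))
    (hq : Orthonormal ℝ q)
    (heig : ∀ l, matVec C (q l) = lam l • q l)
    (hmono : ∀ i j : Fin d, i ≤ j → lam j ≤ lam i)
    (hnn : ∀ l, 0 ≤ lam l)
    (k : ℕ) (hk1 : 1 ≤ k) (hkd : k ≤ d)
    (α : ℝ) (hα0 : 0 < α) (hα : α < 1 / lam ⟨0, by omega⟩)
    (hlamk : 0 < lam ⟨k - 1, by omega⟩)
    (x : ℕ → EuclideanSpace ℝ (Fin d)) (hxnz : ∀ t, x t ≠ 0)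
    (hupd : ∀ t, x (t + 1) = x t + α •
      (matVec C (x t) - (⟪x t, matVec C (x t)⟫ / ‖x t‖ ^ 2) • x t -
        ∑ p : Fin (k - 1),
          (lam (Fin.castLE (by omega) p) * ⟪q (Fin.castLE (by omega) p), x t⟫) •
            q (Fin.castLE (by omega) p)))
    (t : ℕ) (hzk : ⟪q ⟨k - 1, by omega⟩, ‖x t‖⁻¹ • x t⟫ ≠ 0)
    (γ : ℝ) (hγ : γ = (1 / (1 + α * lam ⟨k - 1, by omega⟩)) ^ 2) :
    γ < 1 ∧ ⟪q ⟨k - 1, by omega⟩, ‖x (t + 1)‖⁻¹ • x (t + 1)⟫ ≠ 0 ∧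
      ∀ l : Fin d, (l : ℕ) < k - 1 →
        (⟪q l, ‖x (t + 1)‖⁻¹ • x (t + 1)⟫ /
            ⟪q ⟨k - 1, by omega⟩, ‖x (t + 1)‖⁻¹ • x (t + 1)⟫) ^ 2 ≤
          γ * (⟪q l, ‖x t‖⁻¹ • x t⟫ / ⟪q ⟨k - 1, by omega⟩, ‖x t‖⁻¹ • x t⟫) ^ 2 := by
  have hd : 0 < d := by omega
  have hkd' : k - 1 < d := by omega
  set k1 : Fin d := ⟨k - 1, hkd'⟩ with hk1def
  set v : EuclideanSpace ℝ (Fin d) := x t with hv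
  set w : EuclideanSpace ℝ (Fin d) := x (t + 1) with hw
  have hvne : v ≠ 0 := hxnz t
  have hwne : w ≠ 0 := hxnz (t + 1)
  -- symmetry
  have hsym : ∀ u z : EuclideanSpace ℝ (Fin d), ⟪u, matVec C z⟫ = ⟪matVec C u, z⟫ := by
    intro u z
    have h1 : dotProduct u.ofLp (C.mulVec z.ofLp) = dotProduct (C.mulVec u.ofLp) z.ofLp := by
      rw [Matrix.dotProduct_mulVec, ← Matrix.vecMul_transpose, hCsymm]
    simpa [matVec, PiLp.inner_apply, dotProduct, mul_comm] using h1
  have hqC : ∀ (l : Fin d) (z : EuclideanSpace ℝ (Fin d)),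
      ⟪q l, matVec C z⟫ = lam l * ⟪q l, z⟫ := by
    intro l z
    rw [hsym, heig l, real_inner_smul_left]
  -- orthonormal basis
  have hne : Nonempty (Fin d) := ⟨⟨0, hd⟩⟩
  have hcard : Fintype.card (Fin d) = Module.finrank ℝ (EuclideanSpace ℝ (Fin d)) := by simp
  let b : OrthonormalBasis (Fin d) ℝ (EuclideanSpace ℝ (Fin d)) :=
    (basisOfLinearIndependentOfCardEqFinrank hq.linearIndependent hcard).toOrthonormalBasis
      (by rwa [coe_basisOfLinearIndependentOfCardEqFinrank])
  have hb : ⇑b = q := by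
    simp [b, Module.Basis.coe_toOrthonormalBasis, coe_basisOfLinearIndependentOfCardEqFinrank]
  -- coefficients
  set c : Fin d → ℝ := fun l => ⟪q l, v⟫ with hc
  -- Parseval
  have hnormsq : ‖v‖ ^ 2 = ∑ l, c l ^ 2 := by
    have := b.sum_inner_mul_inner v v
    rw [hb] at this
    rw [← real_inner_self_eq_norm_sq, ← this]
    exact Finset.sum_congr rfl fun l _ => by rw [real_inner_comm]; ring
  have hvCv : ⟪v, matVec C v⟫ = ∑ l, lam l * c l ^ 2 := by
    have := b.sum_inner_mul_inner v (matVec C v)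
    rw [hb] at this
    rw [← this]
    refine Finset.sum_congr rfl fun l _ => ?_
    rw [hqC, real_inner_comm]; ring
  have hnv2 : (0:ℝ) < ‖v‖ ^ 2 := pow_pos (norm_pos_iff.mpr hvne) 2
  set β : ℝ := ⟪v, matVec C v⟫ / ‖v‖ ^ 2 with hβ
  have hβ0 : 0 ≤ β := by
    apply div_nonneg _ (le_of_lt hnv2)
    rw [hvCv]
    exact Finset.sum_nonneg fun l _ => mul_nonneg (hnn l) (sq_nonneg _)
  have hlam0 : 0 < lam ⟨0, hd⟩ := lt_of_lt_of_le hlamk (hmono ⟨0, hd⟩ k1 (by simp [Fin.le_def]))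
  have hβle : β ≤ lam ⟨0, hd⟩ := by
    rw [hβ, div_le_iff₀ hnv2, hnormsq, Finset.mul_sum, hvCv]
    exact Finset.sum_le_sum fun l _ => by
      have := hmono ⟨0, hd⟩ l (by simp [Fin.le_def])
      nlinarith [sq_nonneg (c l)]
  have hαβ : α * β < 1 := by
    have : α * lam ⟨0, hd⟩ < 1 := by
      rw [lt_div_iff₀ hlam0] at hα; linarith
    nlinarith
  -- orthonormality as ite
  have hqq : ∀ i j : Fin d, ⟪q i, q j⟫ = if i = j then 1 else 0 := orthonormal_iff_ite.mp hq
  -- coefficient of x(t+1)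
  have hwv : w = v + α • (matVec C v - β • v -
      ∑ p : Fin (k - 1),
        (lam (Fin.castLE (by omega) p) * ⟪q (Fin.castLE (by omega) p), v⟫) •
          q (Fin.castLE (by omega) p)) := hupd t
  have hcoeff : ∀ l : Fin d, ⟪q l, w⟫ =
      c l + α * (lam l * c l - β * c l -
        ∑ p : Fin (k - 1), (lam (Fin.castLE hkd'.le p) * c (Fin.castLE hkd'.le p)) *
          (if l = Fin.castLE hkd'.le p then 1 else 0)) := by
    intro l
    rw [hwv]
    rw [inner_add_right, real_inner_smul_right, inner_sub_right, inner_sub_right,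
      real_inner_smul_right, inner_sum]
    simp only [real_inner_smul_right, hqC, hqq]
    rfl
  -- for l < k-1
  have hsum_lt : ∀ l : Fin d, (l : ℕ) < k - 1 →
      ∑ p : Fin (k - 1), (lam (Fin.castLE hkd'.le p) * c (Fin.castLE hkd'.le p)) *
          (if l = Fin.castLE hkd'.le p then 1 else 0) = lam l * c l := by
    intro l hl
    rw [Finset.sum_eq_single ⟨(l : ℕ), hl⟩]
    · have : Fin.castLE hkd'.le ⟨(l : ℕ), hl⟩ = l := by ext; rfl
      rw [this]; simp
    · intro p _ hp
      have : l ≠ Fin.castLE hkd'.le p := by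
        intro h
        apply hp
        ext
        simpa [Fin.ext_iff] using h.symm ▸ rfl
      simp [this]
    · simp
  have hsum_k : ∑ p : Fin (k - 1), (lam (Fin.castLE hkd'.le p) * c (Fin.castLE hkd'.le p)) *
      (if k1 = Fin.castLE hkd'.le p then 1 else 0) = 0 := by
    apply Finset.sum_eq_zero
    intro p _
    have : k1 ≠ Fin.castLE hkd'.le p := by
      intro h
      have := p.2
      simp [Fin.ext_iff, hk1def] at h
      omega
    simp [this]
  set r : ℝ := 1 - α * β with hr
  set s : ℝ := 1 + α * (lam k1 - β) with hs
  have hrpos : 0 < r := by rw [hr]; linarith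
  have hspos : 0 < s := by rw [hs]; nlinarith
  have hcl : ∀ l : Fin d, (l : ℕ) < k - 1 → ⟪q l, w⟫ = r * c l := by
    intro l hl
    rw [hcoeff l, hsum_lt l hl, hr]; ring
  have hck : ⟪q k1, w⟫ = s * c k1 := by
    rw [hcoeff k1, hsum_k, hs]; ring
  -- nonzero facts
  have hnv : ‖v‖ ≠ 0 := norm_ne_zero_iff.mpr hvne
  have hnw : ‖w‖ ≠ 0 := norm_ne_zero_iff.mpr hwne
  have hckv : c k1 ≠ 0 := by
    intro h
    apply hzk
    rw [real_inner_smul_right]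
    rw [show (⟪q ⟨k - 1, by omega⟩, v⟫ : ℝ) = c k1 from rfl, h, mul_zero]
  have hckw : ⟪q k1, w⟫ ≠ 0 := by
    rw [hck]; exact mul_ne_zero (ne_of_gt hspos) hckv
  have hγ1 : γ < 1 := by
    rw [hγ]
    have h1 : (1:ℝ) < 1 + α * lam k1 := by nlinarith
    have h2 : 0 < 1 + α * lam k1 := by linarith
    rw [div_pow, one_pow]
    rw [div_lt_one (by positivity)]
    nlinarith
  refine ⟨hγ1, ?_, ?_⟩
  · rw [real_inner_smul_right]
    exact mul_ne_zero (inv_ne_zero hnw) hckw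
  · intro l hl
    rw [real_inner_smul_right, real_inner_smul_right, real_inner_smul_right, real_inner_smul_right]
    rw [mul_div_mul_left _ _ (inv_ne_zero hnw), mul_div_mul_left _ _ (inv_ne_zero hnv)]
    rw [hcl l hl, hck]
    rw [show (⟪q l, v⟫ : ℝ) = c l from rfl, show (⟪q ⟨k - 1, by omega⟩, v⟫ : ℝ) = c k1 from rfl]
    rw [mul_div_mul_comm, mul_pow, hγ]
    apply mul_le_mul_of_nonneg_right _ (sq_nonneg _)
    have hden : (0:ℝ) < 1 + α * lam k1 := by nlinarith
    have key : r / s ≤ 1 / (1 + α * lam k1) := by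
      rw [div_le_div_iff₀ hspos hden]
      have hsr : s = r + α * lam k1 := by rw [hr, hs]; ring
      rw [hsr]
      nlinarith [mul_nonneg (mul_nonneg hα0.le hβ0) (mul_pos hα0 hlamk).le]
    calc (r / s) ^ 2 ≤ (1 / (1 + α * lam k1)) ^ 2 :=
          pow_le_pow_left₀ (by positivity) key 2
      _ = (1 / (1 + α * lam ⟨k - 1, by omega⟩)) ^ 2 := rfl
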